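/- arXiv:2003.06180 — 2 statements merged into one kernel-verified Lean document; each statement's English description precedes it below -/
import Mathlib

section
/- Let A = ⊕_{ℓ≥0} A_ℓ be a graded ℂ-algebra, and let ω : A → A be a linear map sending A_{ℓ+1} to A_ℓ for all ℓ ≥ 0 and sending A_0 to 0. Fix an integer r ≥ 0 and elements a_ℓ ∈ A_ℓ for 0 ≤ ℓ ≤ m. Define b_k ∈ A_k (0 ≤ k ≤ m) by the identity Σ_{k=0}^m b_k = Σ_{ℓ=0}^m (1+ω)^{ℓ+r} a_ℓ (matching graded components). Then Σ_{ℓ=0}^m a_ℓ = Σ_{k=0}^m (1-ω)^{k+r} b_k. -/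
/-- Lemma 5.1 ("mangel"): inversion of the transform `a ↦ Σ (1+ω)^{ℓ+r} a_ℓ`
in a graded ℂ-algebra with a degree-lowering operator ω. -/
theorem stmt0 (R : Type*) [CommRing R] [Algebra ℂ R]
    (A : ℕ → Submodule ℂ R) (hA : DirectSum.IsInternal A)
    (ω : Module.End ℂ R)
    (hω : ∀ ℓ : ℕ, ∀ x ∈ A (ℓ + 1), ω x ∈ A ℓ)
    (hω0 : ∀ x ∈ A 0, ω x = 0)
    (r m : ℕ) (a b : ℕ → R)
    (ha : ∀ ℓ, a ℓ ∈ A ℓ) (hb : ∀ k, b k ∈ A k)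
    (h : ∑ k ∈ Finset.range (m + 1), b k
        = ∑ ℓ ∈ Finset.range (m + 1), ((1 + ω) ^ (ℓ + r)) (a ℓ)) :
    ∑ ℓ ∈ Finset.range (m + 1), a ℓ
      = ∑ k ∈ Finset.range (m + 1), ((1 - ω) ^ (k + r)) (b k) := by
  classical
  -- ω^j maps A ℓ into A (ℓ - j)
  have hmem : ∀ j ℓ, ∀ x ∈ A ℓ, (ω ^ j) x ∈ A (ℓ - j) := by
    intro j
    induction j with
    | zero => intro ℓ x hx; simpa using hx
    | succ j ih =>
      intro ℓ x hx
      have h1 : ω x ∈ A (ℓ - 1) := by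
        cases ℓ with
        | zero => rw [hω0 x hx]; exact (A 0).zero_mem
        | succ ℓ => exact hω ℓ x hx
      have h2 := ih (ℓ - 1) (ω x) h1
      rw [pow_succ, Module.End.mul_apply]
      have he : ℓ - 1 - j = ℓ - (j + 1) := by omega
      rwa [he] at h2
  -- ω^j kills A ℓ for j > ℓ
  have hzero : ∀ j ℓ, ∀ x ∈ A ℓ, ℓ < j → (ω ^ j) x = 0 := by
    intro j
    induction j with
    | zero => intro ℓ x _ hlt; omega
    | succ j ih =>
      intro ℓ x hx _
      rw [pow_succ, Module.End.mul_apply]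
      cases ℓ with
      | zero => rw [hω0 x hx]; simp
      | succ ℓ => exact ih ℓ (ω x) (hω ℓ x hx) (by omega)
  -- truncated binomial expansion of (1+ω)^n on A ℓ
  have hplus : ∀ n ℓ, ℓ ≤ n → ∀ x ∈ A ℓ,
      ((1 + ω) ^ n) x = ∑ t ∈ Finset.range (ℓ + 1), (n.choose t) • (ω ^ t) x := by
    intro n ℓ hln x hx
    have h1 : ((1 + ω) ^ n) x
        = ∑ k ∈ Finset.range (n + 1), (n.choose k) • (ω ^ (n - k)) x := by
      rw [(Commute.one_left ω).add_pow n]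
      simp only [LinearMap.coe_sum, Finset.sum_apply, Module.End.mul_apply,
        Module.End.natCast_apply, one_pow, Module.End.one_apply, map_nsmul]
    have h2 : ∑ k ∈ Finset.range (n + 1), (n.choose k) • (ω ^ (n - k)) x
        = ∑ t ∈ Finset.range (n + 1), (n.choose t) • (ω ^ t) x := by
      rw [← Finset.sum_range_reflect (fun t => (n.choose t) • (ω ^ t) x) (n + 1)]
      apply Finset.sum_congr rfl
      intro k hk
      simp only [Finset.mem_range, Nat.lt_succ_iff] at hk
      simp only [Nat.add_sub_cancel]
      rw [Nat.choose_symm hk]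
    have h3 : ∑ t ∈ Finset.range (n + 1), (n.choose t) • (ω ^ t) x
        = ∑ t ∈ Finset.range (ℓ + 1), (n.choose t) • (ω ^ t) x := by
      refine (Finset.sum_subset (Finset.range_subset_range.mpr (by omega)) ?_).symm
      intro t ht hnt
      simp only [Finset.mem_range, Nat.lt_succ_iff, not_le] at ht hnt
      rw [hzero t ℓ x hx hnt, smul_zero]
    rw [h1, h2, h3]
  -- key inversion identity on a single A ℓ
  have hM : ∀ ℓ, ∀ x ∈ A ℓ,
      ∑ t ∈ Finset.range (ℓ + 1),
        ((ℓ + r).choose t) • ((1 - ω) ^ (ℓ + r - t)) ((ω ^ t) x) = x := by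
    intro ℓ x hx
    set n := ℓ + r with hn
    have hcomm : Commute (1 - ω) ω := (Commute.one_left ω).sub_left (Commute.refl ω)
    have hbin := hcomm.add_pow n
    rw [sub_add_cancel, one_pow] at hbin
    have h1 : x = ∑ k ∈ Finset.range (n + 1),
        (n.choose k) • ((1 - ω) ^ k) ((ω ^ (n - k)) x) := by
      have hcong := congrArg (fun f : Module.End ℂ R => f x) hbin
      simpa only [Module.End.one_apply, LinearMap.coe_sum, Finset.sum_apply,
        Module.End.mul_apply, Module.End.natCast_apply, map_nsmul] using hcong
    have h2 : ∑ k ∈ Finset.range (n + 1),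
          (n.choose k) • ((1 - ω) ^ k) ((ω ^ (n - k)) x)
        = ∑ t ∈ Finset.range (n + 1),
          (n.choose t) • ((1 - ω) ^ (n - t)) ((ω ^ t) x) := by
      rw [← Finset.sum_range_reflect
        (fun t => (n.choose t) • ((1 - ω) ^ (n - t)) ((ω ^ t) x)) (n + 1)]
      apply Finset.sum_congr rfl
      intro k hk
      simp only [Finset.mem_range, Nat.lt_succ_iff] at hk
      simp only [Nat.add_sub_cancel]
      rw [Nat.choose_symm hk, Nat.sub_sub_self hk]
    have h3 : ∑ t ∈ Finset.range (n + 1),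
          (n.choose t) • ((1 - ω) ^ (n - t)) ((ω ^ t) x)
        = ∑ t ∈ Finset.range (ℓ + 1),
          (n.choose t) • ((1 - ω) ^ (n - t)) ((ω ^ t) x) := by
      refine (Finset.sum_subset (Finset.range_subset_range.mpr (by omega)) ?_).symm
      intro t ht hnt
      simp only [Finset.mem_range, Nat.lt_succ_iff, not_le] at ht hnt
      rw [hzero t ℓ x hx hnt, map_zero, smul_zero]
    conv_rhs => rw [h1]
    rw [h2, h3]
  -- explicit formula for the graded pieces of the transform
  set c : ℕ → R := fun k =>
    ∑ ℓ ∈ Finset.Icc k m, ((ℓ + r).choose (ℓ - k)) • (ω ^ (ℓ - k)) (a ℓ) with hc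
  have hcmem : ∀ k, c k ∈ A k := by
    intro k
    apply Submodule.sum_mem
    intro ℓ hℓ
    simp only [Finset.mem_Icc] at hℓ
    refine nsmul_mem ?_ _
    have := hmem (ℓ - k) ℓ (a ℓ) (ha ℓ)
    rwa [show ℓ - (ℓ - k) = k by omega] at this
  -- the triangle swap
  have hswap : ∀ (f : ℕ → ℕ → R),
      ∑ k ∈ Finset.range (m + 1), ∑ ℓ ∈ Finset.Icc k m, f k ℓ
        = ∑ ℓ ∈ Finset.range (m + 1), ∑ k ∈ Finset.range (ℓ + 1), f k ℓ := by
    intro f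
    apply Finset.sum_comm'
    intro k ℓ
    simp only [Finset.mem_range, Finset.mem_Icc]
    omega
  -- Σ c k equals the transform
  have hB : ∑ k ∈ Finset.range (m + 1), c k
      = ∑ ℓ ∈ Finset.range (m + 1), ((1 + ω) ^ (ℓ + r)) (a ℓ) := by
    rw [hc]
    rw [hswap (fun k ℓ => ((ℓ + r).choose (ℓ - k)) • (ω ^ (ℓ - k)) (a ℓ))]
    apply Finset.sum_congr rfl
    intro ℓ hℓ
    rw [hplus (ℓ + r) ℓ (by omega) (a ℓ) (ha ℓ)]
    rw [← Finset.sum_range_reflect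
      (fun t => ((ℓ + r).choose t) • (ω ^ t) (a ℓ)) (ℓ + 1)]
    apply Finset.sum_congr rfl
    intro k hk
    simp only [Finset.mem_range, Nat.lt_succ_iff] at hk
    simp only [Nat.add_sub_cancel]
  -- uniqueness of graded decomposition: b k = c k
  have huniq : ∀ k, k ≤ m → b k = c k := by
    have hsum : ∑ k ∈ Finset.range (m + 1), b k
        = ∑ k ∈ Finset.range (m + 1), c k := h.trans hB.symm
    intro k hk
    have hcomp : ∀ (x : ℕ → R) (hx : ∀ j, x j ∈ A j),
        (((∑ j ∈ Finset.range (m + 1),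
          DirectSum.lof ℂ ℕ (fun i => ↥(A i)) j ⟨x j, hx j⟩) k : ↥(A k)) : R) = x k := by
      intro x hx
      rw [DFinsupp.finset_sum_apply]
      rw [Finset.sum_eq_single k]
      · rw [DirectSum.lof_apply]
      · intro j _ hjk
        rw [DirectSum.lof_eq_of, DirectSum.of_eq_of_ne _ _ _ hjk.symm]
      · intro hkm
        exact absurd (Finset.mem_range.mpr (by omega)) hkm
    have key : (∑ j ∈ Finset.range (m + 1),
          DirectSum.lof ℂ ℕ (fun i => ↥(A i)) j ⟨b j, hb j⟩)
        = ∑ j ∈ Finset.range (m + 1),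
          DirectSum.lof ℂ ℕ (fun i => ↥(A i)) j ⟨c j, hcmem j⟩ := by
      apply hA.injective
      rw [map_sum, map_sum]
      simpa only [DirectSum.lof_eq_of, DirectSum.coeAddMonoidHom_of] using hsum
    have h1 := hcomp b hb
    have h2 := hcomp c hcmem
    rw [← h1, ← h2, key]
  -- conclude
  symm
  calc ∑ k ∈ Finset.range (m + 1), ((1 - ω) ^ (k + r)) (b k)
      = ∑ k ∈ Finset.range (m + 1), ((1 - ω) ^ (k + r)) (c k) :=
        Finset.sum_congr rfl fun k hk => by
          rw [huniq k (Nat.lt_succ_iff.mp (Finset.mem_range.mp hk))]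
    _ = ∑ k ∈ Finset.range (m + 1), ∑ ℓ ∈ Finset.Icc k m,
          ((ℓ + r).choose (ℓ - k)) • ((1 - ω) ^ (k + r)) ((ω ^ (ℓ - k)) (a ℓ)) := by
        apply Finset.sum_congr rfl
        intro k _
        rw [hc]
        simp only [map_sum, map_nsmul]
    _ = ∑ ℓ ∈ Finset.range (m + 1), ∑ k ∈ Finset.range (ℓ + 1),
          ((ℓ + r).choose (ℓ - k)) • ((1 - ω) ^ (k + r)) ((ω ^ (ℓ - k)) (a ℓ)) :=
        hswap _
    _ = ∑ ℓ ∈ Finset.range (m + 1), a ℓ := by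
        apply Finset.sum_congr rfl
        intro ℓ _
        conv_rhs => rw [← hM ℓ (a ℓ) (ha ℓ)]
        rw [← Finset.sum_range_reflect
          (fun k => ((ℓ + r).choose (ℓ - k)) • ((1 - ω) ^ (k + r)) ((ω ^ (ℓ - k)) (a ℓ)))
          (ℓ + 1)]
        apply Finset.sum_congr rfl
        intro t ht
        simp only [Finset.mem_range, Nat.lt_succ_iff] at ht
        simp only [Nat.add_sub_cancel]
        rw [show ℓ - (ℓ - t) = t by omega, show ℓ - t + r = ℓ + r - t by omega]
end

section
/- Let A = ⊕_{ℓ≥0} A_ℓ be a graded ℂ-algebra and ω : A → A a linear map with ω(A_{ℓ+1}) ⊆ A_ℓ and ω(A_0) = 0. Then the operators T_ω and T_{-ω} on finite graded sums, defined by T_ω(Σ_ℓ a_ℓ) = Σ_ℓ (1+ω)^{ℓ+r} a_ℓ for a fixed integer r ≥ 0, satisfy T_{-ω} ∘ T_ω = Id on ⊕_{ℓ=0}^m A_ℓ for every m. -/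
open DirectSum Finset

section Aux

variable {R : Type*} [CommRing R] [Algebra ℂ R]
variable (A : ℕ → Submodule ℂ R) [DirectSum.Decomposition A]
variable (σ : Module.End ℂ R)

lemma aux_pow_mem (hσ : ∀ ℓ : ℕ, ∀ x ∈ A (ℓ + 1), σ x ∈ A ℓ) :
    ∀ i l : ℕ, i ≤ l → ∀ x ∈ A l, (σ ^ i) x ∈ A (l - i) := by
  intro i
  induction i with
  | zero => intro l _ x hx; simpa using hx
  | succ i ih =>
    intro l hil x hx
    have h1 : (σ ^ (i + 1)) x = σ ((σ ^ i) x) := by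
      rw [pow_succ']; rfl
    rw [h1]
    have hmem := ih l (by omega) x hx
    have h2 : l - i = (l - (i + 1)) + 1 := by omega
    rw [h2] at hmem
    exact hσ _ _ hmem

lemma aux_pow_zero (hσ : ∀ ℓ : ℕ, ∀ x ∈ A (ℓ + 1), σ x ∈ A ℓ)
    (hσ0 : ∀ x ∈ A 0, σ x = 0) :
    ∀ i l : ℕ, l < i → ∀ x ∈ A l, (σ ^ i) x = 0 := by
  intro i l hli x hx
  have h0 : (σ ^ l) x ∈ A 0 := by
    simpa using aux_pow_mem A σ hσ l l le_rfl x hx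
  have h1 : σ ((σ ^ l) x) = 0 := hσ0 _ h0
  have h2 : σ ^ i = σ ^ (i - (l + 1)) * (σ * σ ^ l) := by
    rw [← pow_succ', ← pow_add]; congr 1; omega
  rw [h2]
  simp [Module.End.mul_apply, h1]

lemma aux_expand (n : ℕ) (x : R) :
    ((1 + σ) ^ n) x = ∑ i ∈ range (n + 1), (n.choose i : ℂ) • (σ ^ i) x := by
  have h : (1 + σ) ^ n = ∑ i ∈ range (n + 1), (n.choose i : ℂ) • σ ^ i := by
    rw [add_comm, Commute.add_pow (Commute.one_right σ)]
    refine Finset.sum_congr rfl fun i _ => ?_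
    simp [Nat.cast_smul_eq_nsmul, nsmul_eq_mul, (Nat.cast_commute (n.choose i) (σ ^ i)).eq, mul_comm]
  rw [h]
  simp [LinearMap.sum_apply]

end Aux

section Aux2
set_option linter.unusedSectionVars false

variable {R : Type*} [CommRing R] [Algebra ℂ R]
variable (A : ℕ → Submodule ℂ R) [DirectSum.Decomposition A]
variable (σ : Module.End ℂ R)

lemma aux_decompose (hσ : ∀ ℓ : ℕ, ∀ x ∈ A (ℓ + 1), σ x ∈ A ℓ)
    (hσ0 : ∀ x ∈ A 0, σ x = 0)
    (l : ℕ) (x : R) (hx : x ∈ A l) (n k : ℕ) :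
    (DirectSum.decompose A (((1 + σ) ^ n) x) k : R) =
      if k ≤ l then (n.choose (l - k) : ℂ) • (σ ^ (l - k)) x else 0 := by
  rw [aux_expand, DirectSum.decompose_sum]
  have hterm : ∀ i, (DirectSum.decompose A ((σ ^ i) x) k : R) =
      if i ≤ l ∧ k = l - i then (σ ^ i) x else 0 := by
    intro i
    by_cases hi : i ≤ l
    · have hmem : (σ ^ i) x ∈ A (l - i) := aux_pow_mem A σ hσ i l hi x hx
      by_cases hk : k = l - i
      · subst hk; simp [hi, DirectSum.decompose_of_mem_same A hmem]
      · simp [hk, DirectSum.decompose_of_mem_ne A hmem (Ne.symm hk)]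
    · rw [aux_pow_zero A σ hσ hσ0 i l (by omega) x hx]
      simp [hi]
  have hcoe : ((∑ i ∈ range (n + 1), DirectSum.decompose A ((n.choose i : ℂ) • (σ ^ i) x)) k : R)
      = ∑ i ∈ range (n + 1), (n.choose i : ℂ) • (DirectSum.decompose A ((σ ^ i) x) k : R) := by
    rw [DFinsupp.finset_sum_apply]
    rw [AddSubmonoidClass.coe_finset_sum]
    refine Finset.sum_congr rfl fun i _ => ?_
    rw [DirectSum.decompose_smul]
    rw [DirectSum.smul_apply]; simp
  rw [hcoe]
  simp_rw [hterm]
  by_cases hk : k ≤ l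
  · rw [if_pos hk, Finset.sum_eq_single (l - k)]
    · rw [if_pos ⟨Nat.sub_le l k, (Nat.sub_sub_self hk).symm⟩]
    · intro b _ hb
      rw [if_neg, smul_zero]
      rintro ⟨h1, h2⟩
      omega
    · intro hmem
      rw [Finset.mem_range, not_lt] at hmem
      simp [Nat.choose_eq_zero_of_lt (show n < l - k by omega)]
  · rw [if_neg hk]
    apply Finset.sum_eq_zero
    intro b _
    rw [if_neg, smul_zero]
    rintro ⟨h1, h2⟩
    omega

end Aux2

section Aux3
set_option linter.unusedSectionVars false

variable {R : Type*} [CommRing R] [Algebra ℂ R]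
variable (A : ℕ → Submodule ℂ R) [DirectSum.Decomposition A]
variable (ω : Module.End ℂ R)

lemma aux_key (hω : ∀ ℓ : ℕ, ∀ x ∈ A (ℓ + 1), ω x ∈ A ℓ)
    (hω0 : ∀ x ∈ A 0, ω x = 0)
    (r m l : ℕ) (hl : l ≤ m) (x : R) (hx : x ∈ A l) :
    ∑ k ∈ Finset.range (m + 1),
      ((1 + (-ω)) ^ (k + r)) (DirectSum.decompose A (((1 + ω) ^ (l + r)) x) k : R) = x := by
  have hstep1 : ∀ k, ((1 + (-ω)) ^ (k + r)) (DirectSum.decompose A (((1 + ω) ^ (l + r)) x) k : R)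
      = if k ≤ l then ((l + r).choose (l - k) : ℂ) • ((1 + (-ω)) ^ (k + r)) ((ω ^ (l - k)) x)
        else 0 := by
    intro k
    rw [aux_decompose A ω hω hω0 l x hx (l + r) k]
    split
    · rw [map_smul]
    · rw [map_zero]
  simp_rw [hstep1]
  rw [← Finset.sum_subset (Finset.range_subset_range.2 (by omega : l + 1 ≤ m + 1))
      (fun k _ hk => by
        rw [Finset.mem_range, not_lt] at hk
        rw [if_neg (by omega)])]
  rw [Finset.sum_congr rfl (fun k hk => if_pos (by rw [Finset.mem_range] at hk; omega))]
  rw [← Finset.sum_range_reflect]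
  have hstep2 : ∀ j ∈ Finset.range (l + 1),
      ((l + r).choose (l - (l + 1 - 1 - j)) : ℂ) •
        ((1 + (-ω)) ^ ((l + 1 - 1 - j) + r)) ((ω ^ (l - (l + 1 - 1 - j))) x)
      = ((l + r).choose j : ℂ) • ((1 + (-ω)) ^ ((l + r) - j)) ((ω ^ j) x) := by
    intro j hj
    rw [Finset.mem_range] at hj
    have h1 : l - (l + 1 - 1 - j) = j := by omega
    have h2 : (l + 1 - 1 - j) + r = (l + r) - j := by omega
    rw [h1, h2]
  rw [Finset.sum_congr rfl hstep2]
  rw [Finset.sum_subset (Finset.range_subset_range.2 (by omega : l + 1 ≤ l + r + 1))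
      (fun j _ hj => by
        rw [Finset.mem_range, not_lt] at hj
        rw [aux_pow_zero A ω hω hω0 j l (by omega) x hx, map_zero, smul_zero])]
  have hc : Commute ω (1 + (-ω)) :=
    (Commute.one_right ω).add_right (Commute.refl ω).neg_right
  have hop : ∑ j ∈ Finset.range (l + r + 1),
      ((l + r).choose j : ℂ) • ((1 + (-ω)) ^ ((l + r) - j) * ω ^ j) = (1 : Module.End ℂ R) := by
    have hb := hc.add_pow (l + r)
    rw [show ω + (1 + -ω) = 1 by abel, one_pow] at hb
    refine Eq.trans ?_ hb.symm
    refine Finset.sum_congr rfl fun j _ => ?_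
    rw [Nat.cast_smul_eq_nsmul, nsmul_eq_mul, (Nat.cast_commute ((l + r).choose j)
      ((1 + (-ω)) ^ ((l + r) - j) * ω ^ j)).eq, (hc.pow_pow j ((l + r) - j)).eq, mul_assoc]
  calc ∑ j ∈ Finset.range (l + r + 1),
        ((l + r).choose j : ℂ) • ((1 + (-ω)) ^ ((l + r) - j)) ((ω ^ j) x)
      = (∑ j ∈ Finset.range (l + r + 1),
          ((l + r).choose j : ℂ) • ((1 + (-ω)) ^ ((l + r) - j) * ω ^ j)) x := by
        simp [LinearMap.sum_apply, LinearMap.smul_apply, Module.End.mul_apply]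
    _ = x := by rw [hop]; rfl

lemma aux_memS (hω : ∀ ℓ : ℕ, ∀ x ∈ A (ℓ + 1), ω x ∈ A ℓ)
    (hω0 : ∀ x ∈ A 0, ω x = 0)
    (m l n : ℕ) (hl : l ≤ m) (x : R) (hx : x ∈ A l) :
    ((1 + ω) ^ n) x ∈ ⨆ ℓ ∈ Finset.range (m + 1), A ℓ := by
  rw [aux_expand]
  refine Submodule.sum_mem _ fun i _ => Submodule.smul_mem _ _ ?_
  by_cases hi : i ≤ l
  · have hmem : (ω ^ i) x ∈ A (l - i) := aux_pow_mem A ω hω i l hi x hx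
    exact Submodule.mem_iSup_of_mem (l - i)
      (Submodule.mem_iSup_of_mem (Finset.mem_range.2 (by omega)) hmem)
  · rw [aux_pow_zero A ω hω hω0 i l (by omega) x hx]
    exact Submodule.zero_mem _

lemma aux_decompose_zero (m : ℕ) (x : R)
    (hx : x ∈ ⨆ ℓ ∈ Finset.range (m + 1), A ℓ) :
    ∀ k, m < k → (DirectSum.decompose A x k : R) = 0 := by
  refine Submodule.iSup_induction (motive := fun y => ∀ k, m < k → (DirectSum.decompose A y k : R) = 0)
    _ hx ?_ ?_ ?_
  · intro ℓ y hy k hk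
    by_cases hℓ : ℓ ∈ Finset.range (m + 1)
    · rw [iSup_pos hℓ] at hy
      rw [Finset.mem_range] at hℓ
      exact DirectSum.decompose_of_mem_ne A hy (by omega)
    · rw [iSup_neg hℓ] at hy
      rw [(Submodule.mem_bot ℂ).1 hy]
      simp
  · intro k hk; simp
  · intro y z hy hz k hk
    rw [DirectSum.decompose_add]
    simp [hy k hk, hz k hk]

end Aux3

/-- `T_{-ω} ∘ T_ω = Id` on `⊕_{ℓ=0}^m A_ℓ`, where
`T_σ x = Σ_ℓ (1+σ)^{ℓ+r} x_ℓ` in terms of the graded decomposition. -/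
theorem stmt1 (R : Type*) [CommRing R] [Algebra ℂ R]
    (A : ℕ → Submodule ℂ R) [DirectSum.Decomposition A]
    (ω : Module.End ℂ R)
    (hω : ∀ ℓ : ℕ, ∀ x ∈ A (ℓ + 1), ω x ∈ A ℓ)
    (hω0 : ∀ x ∈ A 0, ω x = 0)
    (r m : ℕ)
    (T : Module.End ℂ R → R → R)
    (hT : ∀ σ : Module.End ℂ R, ∀ x ∈ ⨆ ℓ ∈ Finset.range (m + 1), A ℓ,
      T σ x = ∑ ℓ ∈ Finset.range (m + 1),
        ((1 + σ) ^ (ℓ + r)) (DirectSum.decompose A x ℓ : R)) :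
    ∀ x ∈ ⨆ ℓ ∈ Finset.range (m + 1), A ℓ, T (-ω) (T ω x) = x := by
  intro x hx
  rw [hT ω x hx]
  have hmem : (∑ ℓ ∈ Finset.range (m + 1), ((1 + ω) ^ (ℓ + r)) (DirectSum.decompose A x ℓ : R))
      ∈ ⨆ ℓ ∈ Finset.range (m + 1), A ℓ := by
    refine Submodule.sum_mem _ fun ℓ hℓ => ?_
    rw [Finset.mem_range] at hℓ
    exact aux_memS A ω hω hω0 m ℓ (ℓ + r) (by omega) _ (SetLike.coe_mem _)
  rw [hT (-ω) _ hmem]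
  have hdec : ∀ k, (DirectSum.decompose A
      (∑ ℓ ∈ Finset.range (m + 1), ((1 + ω) ^ (ℓ + r)) (DirectSum.decompose A x ℓ : R)) k : R)
      = ∑ ℓ ∈ Finset.range (m + 1),
        (DirectSum.decompose A (((1 + ω) ^ (ℓ + r)) (DirectSum.decompose A x ℓ : R)) k : R) := by
    intro k
    rw [DirectSum.decompose_sum, DFinsupp.finset_sum_apply, AddSubmonoidClass.coe_finset_sum]
  simp_rw [hdec, map_sum]
  rw [Finset.sum_comm]
  have hinner : ∀ ℓ ∈ Finset.range (m + 1),
      ∑ k ∈ Finset.range (m + 1), ((1 + (-ω)) ^ (k + r))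
        (DirectSum.decompose A (((1 + ω) ^ (ℓ + r)) (DirectSum.decompose A x ℓ : R)) k : R)
      = (DirectSum.decompose A x ℓ : R) := by
    intro ℓ hℓ
    rw [Finset.mem_range] at hℓ
    exact aux_key A ω hω hω0 r m ℓ (by omega) _ (SetLike.coe_mem _)
  rw [Finset.sum_congr rfl hinner]
  have hz := aux_decompose_zero A m x hx
  classical
  conv_rhs => rw [← DirectSum.sum_support_decompose A x]
  refine (Finset.sum_subset ?_ ?_).symm
  · intro k hk
    rw [DFinsupp.mem_support_iff] at hk
    rw [Finset.mem_range]
    by_contra h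
    exact hk (Subtype.ext (hz k (by omega)))
  · intro k _ hk
    rw [DFinsupp.notMem_support_iff] at hk
    rw [hk]; rfl
end
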